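/- Over a field k of characteristic 3, two two-dimensional symplectic triple systems of type (i), given by symplectic bases {a,b} with [aaa] = αb (respectively [a'a'a'] = α'b') and all other triple products of basis elements zero, are isomorphic if and only if there is a scalar 0 ≠ μ ∈ k with α = μ⁴α'. Two two-dimensional simple symplectic triple systems of type (ii), given by symplectic bases with [aab]=[aba]=[baa]=εa, [abb]=[bab]=[bba]=−εb, [aaa]=[bbb]=0 (respectively with parameter ε'), are isomorphic if and only if ε = ε'. -/

import Mathlib

section StsAux


variable {k T T' : Type*} [Field k] [AddCommGroup T] [Module k T]
  [AddCommGroup T'] [Module k T']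

lemma sts_exists_basis {a b : T} (hspan : Submodule.span k {a, b} = ⊤)
    (h2 : Module.finrank k T = 2) :
    ∃ bT : Module.Basis (Fin 2) k T, bT 0 = a ∧ bT 1 = b := by
  have hsub : ({a, b} : Set T) ⊆ Set.range ![a, b] := by
    rintro x (rfl | rfl)
    · exact ⟨0, rfl⟩
    · exact ⟨1, rfl⟩
  have hle : ⊤ ≤ Submodule.span k (Set.range ![a, b]) := by
    rw [← hspan]; exact Submodule.span_mono hsub
  have hcard : Fintype.card (Fin 2) = Module.finrank k T := by simp [h2]
  refine ⟨basisOfTopLeSpanOfCardEqFinrank ![a, b] hle hcard, ?_, ?_⟩ <;>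
    simp [coe_basisOfTopLeSpanOfCardEqFinrank]

lemma sts_decomp (bT : Module.Basis (Fin 2) k T) {a b : T} (ha : bT 0 = a) (hb : bT 1 = b)
    (x : T) : ∃ c d : k, x = c • a + d • b := by
  refine ⟨bT.repr x 0, bT.repr x 1, ?_⟩
  rw [← ha, ← hb]
  have := bT.sum_repr x
  rw [Fin.sum_univ_two] at this
  exact this.symm

lemma sts_coeff_eq (bT : Module.Basis (Fin 2) k T) {a b : T} (ha : bT 0 = a) (hb : bT 1 = b)
    {c d e f : k} (h : c • a + d • b = e • a + f • b) : c = e ∧ d = f := by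
  rw [← ha, ← hb] at h
  have h0 := congrArg (fun v => bT.repr v 0) h
  have h1 := congrArg (fun v => bT.repr v 1) h
  simp [Module.Basis.repr_self, Finsupp.single_apply] at h0 h1
  exact ⟨h0, h1⟩

lemma sts_B_values {B : T →ₗ[k] T →ₗ[k] k} (halt : ∀ x : T, B x x = 0) {a b : T}
    (hab : B a b = 1) : B a a = 0 ∧ B b b = 0 ∧ B b a = -1 := by
  refine ⟨halt a, halt b, ?_⟩
  have := halt (a + b)
  simp [map_add, halt a, halt b, hab] at this
  linear_combination this

lemma sts_B_expand {B : T →ₗ[k] T →ₗ[k] k} {a b : T}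
    (haa : B a a = 0) (hab : B a b = 1) (hba : B b a = -1) (hbb : B b b = 0)
    (p q r s : k) : B (p • a + q • b) (r • a + s • b) = p * s - q * r := by
  simp [map_add, map_smul, haa, hab, hba, hbb]
  ring

lemma sts_tpI_expand {tp : T →ₗ[k] T →ₗ[k] T →ₗ[k] T} {a b : T} {α : k}
    (h1 : tp a a a = α • b) (h2 : tp a a b = 0) (h3 : tp a b a = 0) (h4 : tp b a a = 0)
    (h5 : tp a b b = 0) (h6 : tp b a b = 0) (h7 : tp b b a = 0) (h8 : tp b b b = 0)
    (p q r s t u : k) :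
    tp (p • a + q • b) (r • a + s • b) (t • a + u • b) = (p * r * t * α) • b := by
  simp only [map_add, map_smul, LinearMap.add_apply, LinearMap.smul_apply,
    h1, h2, h3, h4, h5, h6, h7, h8, smul_zero, add_zero, zero_add]
  module

lemma sts_tpII_expand {tp : T →ₗ[k] T →ₗ[k] T →ₗ[k] T} {a b : T} {ε : k}
    (h1 : tp a a a = 0) (h8 : tp b b b = 0)
    (h2 : tp a a b = ε • a) (h3 : tp a b a = ε • a) (h4 : tp b a a = ε • a)
    (h5 : tp a b b = -(ε • b)) (h6 : tp b a b = -(ε • b)) (h7 : tp b b a = -(ε • b))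
    (p q r s t u : k) :
    tp (p • a + q • b) (r • a + s • b) (t • a + u • b) =
      (ε * (p * r * u + p * s * t + q * r * t)) • a +
        (-(ε * (p * s * u + q * r * u + q * s * t))) • b := by
  simp only [map_add, map_smul, LinearMap.add_apply, LinearMap.smul_apply,
    h1, h2, h3, h4, h5, h6, h7, h8, smul_zero, add_zero, zero_add]
  module

lemma sts_mk_equiv (bT : Module.Basis (Fin 2) k T) (bT' : Module.Basis (Fin 2) k T')
    {a b : T} {a' b' : T'} (ha : bT 0 = a) (hb : bT 1 = b)
    (ha' : bT' 0 = a') (hb' : bT' 1 = b') (μ : k) (hμ : μ ≠ 0) :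
    ∃ φ : T ≃ₗ[k] T', φ a = μ • a' ∧ φ b = μ⁻¹ • b' := by
  set f : T →ₗ[k] T' := bT.constr k ![μ • a', μ⁻¹ • b'] with hf
  set g : T' →ₗ[k] T := bT'.constr k ![μ⁻¹ • a, μ • b] with hg
  have hfa : f a = μ • a' := by rw [← ha, hf, Module.Basis.constr_basis]; rfl
  have hfb : f b = μ⁻¹ • b' := by rw [← hb, hf, Module.Basis.constr_basis]; rfl
  have hga : g a' = μ⁻¹ • a := by rw [← ha', hg, Module.Basis.constr_basis]; rfl
  have hgb : g b' = μ • b := by rw [← hb', hg, Module.Basis.constr_basis]; rfl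
  have h1 : f.comp g = LinearMap.id := by
    apply bT'.ext
    intro i
    fin_cases i <;>
      simp [ha', hb', hga, hgb, map_smul, hfa, hfb, smul_smul,
        inv_mul_cancel₀ hμ, mul_inv_cancel₀ hμ]
  have h2 : g.comp f = LinearMap.id := by
    apply bT.ext
    intro i
    fin_cases i <;>
      simp [ha, hb, hfa, hfb, map_smul, hga, hgb, smul_smul,
        inv_mul_cancel₀ hμ, mul_inv_cancel₀ hμ]
  exact ⟨LinearEquiv.ofLinear f g h1 h2, hfa, hfb⟩

end StsAux


/-- A symplectic triple system: a finite-dimensional vector space `T` over a field `k`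
with a nonzero alternating bilinear form `B` and a trilinear product `tp` satisfying
identities (a)–(d). -/
def IsSympTripleSystem (k : Type*) {T : Type*} [Field k] [AddCommGroup T] [Module k T]
    (tp : T →ₗ[k] T →ₗ[k] T →ₗ[k] T) (B : T →ₗ[k] T →ₗ[k] k) : Prop :=
  (∀ x : T, B x x = 0) ∧ B ≠ 0 ∧
  (∀ x y z : T, tp x y z = tp y x z) ∧
  (∀ x y z : T, tp x y z - tp x z y = B x z • y - B x y • z + (2 * B y z) • x) ∧
  (∀ x y u v w : T, tp x y (tp u v w) =
      tp (tp x y u) v w + tp u (tp x y v) w + tp u v (tp x y w)) ∧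
  (∀ x y u v : T, B (tp x y u) v + B u (tp x y v) = 0)

/-- Two symplectic triple systems are isomorphic if there is a bijective linear map
preserving the bilinear forms and the triple products. -/
def STSIsomorphic (k : Type*) {T T' : Type*} [Field k]
    [AddCommGroup T] [Module k T] [AddCommGroup T'] [Module k T']
    (tp : T →ₗ[k] T →ₗ[k] T →ₗ[k] T) (B : T →ₗ[k] T →ₗ[k] k)
    (tp' : T' →ₗ[k] T' →ₗ[k] T' →ₗ[k] T') (B' : T' →ₗ[k] T' →ₗ[k] k) : Prop :=
  ∃ φ : T ≃ₗ[k] T', (∀ x y : T, B' (φ x) (φ y) = B x y) ∧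
    (∀ x y z : T, φ (tp x y z) = tp' (φ x) (φ y) (φ z))

/-- A two-dimensional symplectic triple system of type (i): a symplectic basis `{a, b}`
with `[aaa] = α • b` and all other triple products of basis elements zero. -/
def STSTypeI (k : Type*) {T : Type*} [Field k] [AddCommGroup T] [Module k T]
    (tp : T →ₗ[k] T →ₗ[k] T →ₗ[k] T) (B : T →ₗ[k] T →ₗ[k] k) (a b : T) (α : k) : Prop :=
  Submodule.span k {a, b} = ⊤ ∧ B a b = 1 ∧
  tp a a a = α • b ∧ tp a a b = 0 ∧ tp a b a = 0 ∧ tp b a a = 0 ∧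
  tp a b b = 0 ∧ tp b a b = 0 ∧ tp b b a = 0 ∧ tp b b b = 0

/-- A two-dimensional simple symplectic triple system of type (ii): a symplectic basis
`{a, b}` with `[aaa] = 0 = [bbb]`, `[aab] = [aba] = [baa] = ε • a`,
`[abb] = [bab] = [bba] = -(ε • b)`, for some `ε ≠ 0`. -/
def STSTypeII (k : Type*) {T : Type*} [Field k] [AddCommGroup T] [Module k T]
    (tp : T →ₗ[k] T →ₗ[k] T →ₗ[k] T) (B : T →ₗ[k] T →ₗ[k] k) (a b : T) (ε : k) : Prop :=
  Submodule.span k {a, b} = ⊤ ∧ B a b = 1 ∧ ε ≠ 0 ∧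
  tp a a a = 0 ∧ tp b b b = 0 ∧
  tp a a b = ε • a ∧ tp a b a = ε • a ∧ tp b a a = ε • a ∧
  tp a b b = -(ε • b) ∧ tp b a b = -(ε • b) ∧ tp b b a = -(ε • b)

/-- Over a field of characteristic 3, two two-dimensional symplectic triple
systems of type (i) with parameters `α`, `α'` are isomorphic iff `α = μ⁴ • α'` for some
`μ ≠ 0`; two of type (ii) with parameters `ε`, `ε'` are isomorphic iff `ε = ε'`. -/
theorem iso_classification_two_dim_STS_char_three (k : Type*) [Field k]
    (hchar : ringChar k = 3) :
    (∀ (T T' : Type) (_ : AddCommGroup T) (_ : Module k T) (_ : AddCommGroup T')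
        (_ : Module k T') (_ : FiniteDimensional k T) (_ : FiniteDimensional k T')
        (tp : T →ₗ[k] T →ₗ[k] T →ₗ[k] T) (B : T →ₗ[k] T →ₗ[k] k)
        (tp' : T' →ₗ[k] T' →ₗ[k] T' →ₗ[k] T') (B' : T' →ₗ[k] T' →ₗ[k] k)
        (a b : T) (α : k) (a' b' : T') (α' : k),
        Module.finrank k T = 2 → Module.finrank k T' = 2 →
        IsSympTripleSystem k tp B → IsSympTripleSystem k tp' B' →
        STSTypeI k tp B a b α → STSTypeI k tp' B' a' b' α' →
        (STSIsomorphic k tp B tp' B' ↔ ∃ μ : k, μ ≠ 0 ∧ α = μ ^ 4 * α')) ∧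
    (∀ (T T' : Type) (_ : AddCommGroup T) (_ : Module k T) (_ : AddCommGroup T')
        (_ : Module k T') (_ : FiniteDimensional k T) (_ : FiniteDimensional k T')
        (tp : T →ₗ[k] T →ₗ[k] T →ₗ[k] T) (B : T →ₗ[k] T →ₗ[k] k)
        (tp' : T' →ₗ[k] T' →ₗ[k] T' →ₗ[k] T') (B' : T' →ₗ[k] T' →ₗ[k] k)
        (a b : T) (ε : k) (a' b' : T') (ε' : k),
        Module.finrank k T = 2 → Module.finrank k T' = 2 →
        IsSympTripleSystem k tp B → IsSympTripleSystem k tp' B' →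
        STSTypeII k tp B a b ε → STSTypeII k tp' B' a' b' ε' →
        (STSIsomorphic k tp B tp' B' ↔ ε = ε')) := by
  
  have h3 : (3 : k) = 0 := by
    have := ringChar.Nat.cast_ringChar (R := k)
    rw [hchar] at this
    exact_mod_cast this
  constructor
  · -- Type I
    intro T T' _ _ _ _ _ _ tp B tp' B' a b α a' b' α' h2T h2T' hsts hsts' hI hI'
    obtain ⟨hspan, hBab, p1, p2, p3, p4, p5, p6, p7, p8⟩ := hI
    obtain ⟨hspan', hBab', q1, q2, q3, q4, q5, q6, q7, q8⟩ := hI'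
    obtain ⟨bT, ha, hb⟩ := sts_exists_basis hspan h2T
    obtain ⟨bT', ha', hb'⟩ := sts_exists_basis hspan' h2T'
    obtain ⟨haa, hbb, hba⟩ := sts_B_values hsts.1 hBab
    obtain ⟨haa', hbb', hba'⟩ := sts_B_values hsts'.1 hBab'
    have Bexp := sts_B_expand haa hBab hba hbb
    have Bexp' := sts_B_expand haa' hBab' hba' hbb'
    have tpExp := sts_tpI_expand p1 p2 p3 p4 p5 p6 p7 p8
    have tpExp' := sts_tpI_expand q1 q2 q3 q4 q5 q6 q7 q8
    constructor
    · rintro ⟨φ, hφB, hφtp⟩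
      obtain ⟨p, q, hpa⟩ := sts_decomp bT' ha' hb' (φ a)
      obtain ⟨r, s, hpb⟩ := sts_decomp bT' ha' hb' (φ b)
      have hdet : p * s - q * r = 1 := by
        have := hφB a b
        rw [hpa, hpb, Bexp', hBab] at this
        exact this
      have e1 := hφtp a a a
      rw [p1, map_smul, hpb, hpa, tpExp'] at e1
      have e1' : (α * r) • a' + (α * s) • b' = (0 : k) • a' + (p * p * p * α') • b' := by
        rw [zero_smul, zero_add, ← e1, smul_add, smul_smul, smul_smul]
      obtain ⟨er, es⟩ := sts_coeff_eq bT' ha' hb' e1'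
      have e2 := hφtp b b b
      rw [p8, map_zero, hpb, tpExp'] at e2
      have e2' : (0 : k) • a' + (0 : k) • b' = (0 : k) • a' + (r * r * r * α') • b' := by
        simpa using e2
      have hr3 : r * r * r * α' = 0 := (sts_coeff_eq bT' ha' hb' e2').2.symm
      by_cases hα' : α' = 0
      · refine ⟨1, one_ne_zero, ?_⟩
        subst hα'
        rw [mul_zero] at es ⊢
        by_contra hα
        have hr : r = 0 := by
          rcases mul_eq_zero.mp er with h | h
          · exact absurd h hα
          · exact h
        have hs : s = 0 := by
          rcases mul_eq_zero.mp es with h | h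
          · exact absurd h hα
          · exact h
        rw [hr, hs] at hdet
        simp at hdet
      · have hr : r = 0 := by
          have : r ^ 3 * α' = 0 := by linear_combination hr3
          rcases mul_eq_zero.mp this with h | h
          · exact pow_eq_zero_iff (n := 3) (by norm_num) |>.mp h
          · exact absurd h hα'
        have hps : p * s = 1 := by rw [hr] at hdet; linear_combination hdet
        have hp : p ≠ 0 := by
          intro h
          rw [h, zero_mul] at hps
          exact one_ne_zero hps.symm
        refine ⟨p, hp, ?_⟩
        have : α * s = p * p * p * α' := es
        linear_combination p * this - α * hps
    · rintro ⟨μ, hμ, hαα⟩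
      obtain ⟨φ, hφa, hφb⟩ := sts_mk_equiv bT bT' ha hb ha' hb' μ hμ
      have hφx : ∀ c d : k, φ (c • a + d • b) = (c * μ) • a' + (d * μ⁻¹) • b' := by
        intro c d
        rw [map_add, map_smul, map_smul, hφa, hφb, smul_smul, smul_smul]
      refine ⟨φ, ?_, ?_⟩
      · intro x y
        obtain ⟨c, d, rfl⟩ := sts_decomp bT ha hb x
        obtain ⟨e, f, rfl⟩ := sts_decomp bT ha hb y
        rw [hφx, hφx, Bexp', Bexp]
        field_simp
      · intro x y z
        obtain ⟨c, d, rfl⟩ := sts_decomp bT ha hb x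
        obtain ⟨e, f, rfl⟩ := sts_decomp bT ha hb y
        obtain ⟨u, v, rfl⟩ := sts_decomp bT ha hb z
        rw [tpExp, map_smul, hφb, hφx, hφx, hφx, tpExp', smul_smul]
        congr 1
        rw [hαα]
        field_simp
  · -- Type II
    intro T T' _ _ _ _ _ _ tp B tp' B' a b ε a' b' ε' h2T h2T' hsts hsts' hII hII'
    obtain ⟨hspan, hBab, hε, p1, p8, p2, p3, p4, p5, p6, p7⟩ := hII
    obtain ⟨hspan', hBab', hε', q1, q8, q2, q3, q4, q5, q6, q7⟩ := hII'
    obtain ⟨bT, ha, hb⟩ := sts_exists_basis hspan h2T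
    obtain ⟨bT', ha', hb'⟩ := sts_exists_basis hspan' h2T'
    obtain ⟨haa, hbb, hba⟩ := sts_B_values hsts.1 hBab
    obtain ⟨haa', hbb', hba'⟩ := sts_B_values hsts'.1 hBab'
    have Bexp := sts_B_expand haa hBab hba hbb
    have Bexp' := sts_B_expand haa' hBab' hba' hbb'
    have tpExp := sts_tpII_expand p1 p8 p2 p3 p4 p5 p6 p7
    have tpExp' := sts_tpII_expand q1 q8 q2 q3 q4 q5 q6 q7
    constructor
    · rintro ⟨φ, hφB, hφtp⟩
      obtain ⟨p, q, hpa⟩ := sts_decomp bT' ha' hb' (φ a)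
      obtain ⟨r, s, hpb⟩ := sts_decomp bT' ha' hb' (φ b)
      have hdet : p * s - q * r = 1 := by
        have := hφB a b
        rw [hpa, hpb, Bexp', hBab] at this
        exact this
      have e1 := hφtp a a b
      rw [p2, map_smul, hpa, hpb, tpExp'] at e1
      have e1' : (ε * p) • a' + (ε * q) • b' =
          (ε' * (p * p * s + p * q * r + q * p * r)) • a' +
            (-(ε' * (p * q * s + q * p * s + q * q * r))) • b' := by
        rw [← e1, smul_add, smul_smul, smul_smul]
      obtain ⟨ea, eb⟩ := sts_coeff_eq bT' ha' hb' e1'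
      have hεp : ε * p = ε' * p := by
        linear_combination ea + ε' * p * hdet + ε' * p * q * r * h3
      have hεq : ε * q = ε' * q := by
        linear_combination eb + ε' * q * hdet - ε' * q * p * s * h3
      by_cases hp : p = 0
      · have hq : q ≠ 0 := by
          intro hq
          rw [hp, hq] at hdet
          simp at hdet
        exact mul_right_cancel₀ hq hεq
      · exact mul_right_cancel₀ hp hεp
    · intro hεε
      subst hεε
      obtain ⟨φ, hφa, hφb⟩ := sts_mk_equiv bT bT' ha hb ha' hb' 1 one_ne_zero
      rw [one_smul] at hφa
      rw [inv_one, one_smul] at hφb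
      have hφx : ∀ c d : k, φ (c • a + d • b) = c • a' + d • b' := by
        intro c d
        rw [map_add, map_smul, map_smul, hφa, hφb]
      refine ⟨φ, ?_, ?_⟩
      · intro x y
        obtain ⟨c, d, rfl⟩ := sts_decomp bT ha hb x
        obtain ⟨e, f, rfl⟩ := sts_decomp bT ha hb y
        rw [hφx, hφx, Bexp', Bexp]
      · intro x y z
        obtain ⟨c, d, rfl⟩ := sts_decomp bT ha hb x
        obtain ⟨e, f, rfl⟩ := sts_decomp bT ha hb y
        obtain ⟨u, v, rfl⟩ := sts_decomp bT ha hb z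
        rw [tpExp, map_add, map_smul, map_smul, hφa, hφb, hφx, hφx, hφx, tpExp']
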